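/- Let M = [A; ε, B] ∈ M_n(Z_p) be a size-sorted Hessenberg matrix with B of size m, and suppose the small factor χ_small of χ_M (the monic factor congruent to χ_B modulo ε given by Hensel's lemma) satisfies ‖χ_small − t^m‖ ≤ |ε|. Then after m QR-rounds (each round: factor M = QR with Q ∈ GL_n(Z_p), R upper triangular, and replace M by RQ), the resulting matrix M' = [A'; ε', B'] satisfies |ε'| ≤ |ε|². -/

import Mathlib

open Matrix Polynomial

namespace St12
variable {S : Type*} [CommRing S] {a b : ℕ}

abbrev Mn (S : Type*) (a b : ℕ) := Matrix (Fin (a+b)) (Fin (a+b)) S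

def tl (X : Mn S a b) : Matrix (Fin a) (Fin a) S := fun i j => X (Fin.castAdd b i) (Fin.castAdd b j)
def br (X : Mn S a b) : Matrix (Fin b) (Fin b) S := fun i j => X (Fin.natAdd a i) (Fin.natAdd a j)
def bl (X : Mn S a b) : Matrix (Fin b) (Fin a) S := fun i j => X (Fin.natAdd a i) (Fin.castAdd b j)

lemma sum_split (f : Fin (a+b) → S) :
    ∑ k, f k = (∑ i : Fin a, f (Fin.castAdd b i)) + ∑ j : Fin b, f (Fin.natAdd a j) := by
  rw [← finSumFinEquiv.sum_comp f, Fintype.sum_sum_type]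
  simp

lemma bl_mul {X Y : Mn S a b} (hX : bl X = 0) (hY : bl Y = 0) : bl (X * Y) = 0 := by
  ext i j
  simp only [bl, Matrix.mul_apply, Matrix.zero_apply]
  rw [sum_split]
  have h1 : ∀ k : Fin a, X (Fin.natAdd a i) (Fin.castAdd b k) = 0 := fun k => congrFun (congrFun hX i) k
  have h2 : ∀ k : Fin b, Y (Fin.natAdd a k) (Fin.castAdd b j) = 0 := fun k => congrFun (congrFun hY k) j
  simp [h1, h2]

lemma tl_mul {X Y : Mn S a b} (hY : bl Y = 0) : tl (X * Y) = tl X * tl Y := by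
  ext i j
  simp only [tl, Matrix.mul_apply]
  rw [sum_split]
  have h2 : ∀ k : Fin b, Y (Fin.natAdd a k) (Fin.castAdd b j) = 0 := fun k => congrFun (congrFun hY k) j
  simp [h2, tl]

lemma br_mul {X Y : Mn S a b} (hX : bl X = 0) : br (X * Y) = br X * br Y := by
  ext i j
  simp only [br, Matrix.mul_apply]
  rw [sum_split]
  have h1 : ∀ k : Fin a, X (Fin.natAdd a i) (Fin.castAdd b k) = 0 := fun k => congrFun (congrFun hX i) k
  simp [h1, br]

lemma bl_one : bl (1 : Mn S a b) = 0 := by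
  ext i j
  simp only [bl, Matrix.one_apply, Matrix.zero_apply]
  rw [if_neg]
  intro h
  have : a + (i : ℕ) = (j : ℕ) := by simpa [Fin.ext_iff] using h
  omega

lemma tl_one : tl (1 : Mn S a b) = 1 := by
  ext i j
  simp [tl, Matrix.one_apply, Fin.ext_iff]

lemma br_one : br (1 : Mn S a b) = 1 := by
  ext i j
  simp [br, Matrix.one_apply, Fin.ext_iff]

lemma bl_pow {X : Mn S a b} (hX : bl X = 0) (k : ℕ) : bl (X ^ k) = 0 := by
  induction k with
  | zero => simpa using bl_one
  | succ n ih => rw [pow_succ]; exact bl_mul ih hX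

lemma tl_pow {X : Mn S a b} (hX : bl X = 0) (k : ℕ) : tl (X ^ k) = (tl X) ^ k := by
  induction k with
  | zero => simpa using tl_one
  | succ n ih => rw [pow_succ, pow_succ, tl_mul hX, ih]

lemma br_pow {X : Mn S a b} (hX : bl X = 0) (k : ℕ) : br (X ^ k) = (br X) ^ k := by
  induction k with
  | zero => simpa using br_one
  | succ n ih => rw [pow_succ, pow_succ, br_mul (bl_pow hX n), ih]

end St12

namespace St12
variable {S : Type*} [CommRing S] {a b : ℕ}

lemma bl_mul_expand (X Y : Mn S a b) : bl (X * Y) = bl X * tl Y + br X * bl Y := by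
  ext i j
  simp only [bl, Matrix.mul_apply, Matrix.add_apply]
  rw [sum_split]
  simp [tl, br, bl]

lemma eq_natAdd {i : Fin (a+b)} (h : a ≤ (i:ℕ)) :
    i = Fin.natAdd a ⟨(i:ℕ) - a, by omega⟩ := by
  simp [Fin.ext_iff, Fin.natAdd]
  omega

lemma eq_castAdd {j : Fin (a+b)} (h : (j:ℕ) < a) : j = Fin.castAdd b ⟨(j:ℕ), h⟩ := by
  simp [Fin.ext_iff, Fin.castAdd]

lemma det_split {X : Mn S a b} (hX : bl X = 0) : X.det = (tl X).det * (br X).det := by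
  have he : X.submatrix finSumFinEquiv finSumFinEquiv =
      Matrix.fromBlocks (tl X) (fun i j => X (Fin.castAdd b i) (Fin.natAdd a j)) 0 (br X) := by
    ext i j
    cases i with
    | inl i => cases j with
      | inl j => rfl
      | inr j => rfl
    | inr i => cases j with
      | inl j => simpa [Matrix.fromBlocks, bl] using congrFun (congrFun hX i) j
      | inr j => rfl
  rw [← Matrix.det_submatrix_equiv_self finSumFinEquiv, he]
  exact Matrix.det_fromBlocks_zero₂₁ _ _ _

lemma bl_of_inv {X Y : Mn S a b} (hX : bl X = 0) (h1 : X * Y = 1) (h2 : Y * X = 1) :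
    bl Y = 0 := by
  have hdet : IsUnit (br X).det := by
    have : X.det * Y.det = 1 := by rw [← Matrix.det_mul, h1, Matrix.det_one]
    have hu : IsUnit X.det := IsUnit.of_mul_eq_one _ this
    rw [det_split hX] at hu
    exact isUnit_of_mul_isUnit_right hu
  have h0 : br X * bl Y = 0 := by
    have := bl_mul_expand X Y
    rw [h1, bl_one, hX, Matrix.zero_mul, zero_add] at this
    exact this.symm
  calc bl Y = ((br X)⁻¹ * br X) * bl Y := by rw [Matrix.nonsing_inv_mul _ hdet, Matrix.one_mul]
  _ = (br X)⁻¹ * (br X * bl Y) := by rw [Matrix.mul_assoc]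
  _ = 0 := by rw [h0, Matrix.mul_zero]

lemma bl_aeval {X : Mn S a b} (hX : bl X = 0) (f : Polynomial S) : bl (aeval X f) = 0 := by
  ext i j
  rw [aeval_eq_sum_range]
  simp only [bl, Matrix.zero_apply]
  rw [Matrix.sum_apply]
  refine Finset.sum_eq_zero fun k _ => ?_
  have := congrFun (congrFun (bl_pow hX k) i) j
  simp only [bl, Matrix.zero_apply] at this
  simp [this]

lemma tl_aeval {X : Mn S a b} (hX : bl X = 0) (f : Polynomial S) :
    tl (aeval X f) = aeval (tl X) f := by
  ext i j
  rw [aeval_eq_sum_range, aeval_eq_sum_range]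
  simp only [tl]
  rw [Matrix.sum_apply, Matrix.sum_apply]
  refine Finset.sum_congr rfl fun k _ => ?_
  have := congrFun (congrFun (tl_pow hX k) i) j
  simp only [tl] at this
  simp [this]

lemma br_aeval {X : Mn S a b} (hX : bl X = 0) (f : Polynomial S) :
    br (aeval X f) = aeval (br X) f := by
  ext i j
  rw [aeval_eq_sum_range, aeval_eq_sum_range]
  simp only [br]
  rw [Matrix.sum_apply, Matrix.sum_apply]
  refine Finset.sum_congr rfl fun k _ => ?_
  have := congrFun (congrFun (br_pow hX k) i) j
  simp only [br] at this
  simp [this]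

lemma dvd_aeval_entry {n : Type*} [Fintype n] [DecidableEq n]
    (X : Matrix n n S) (f : Polynomial S) (c : S) (h : ∀ k, c ∣ f.coeff k) :
    ∀ i j, c ∣ (aeval X f) i j := by
  intro i j
  rw [aeval_eq_sum_range]
  rw [Matrix.sum_apply]
  refine Finset.dvd_sum fun k _ => ?_
  simp only [Matrix.smul_apply, smul_eq_mul]
  exact Dvd.dvd.mul_right (h k) _

lemma map_aeval {T : Type*} [CommRing T] {n : Type*} [Fintype n] [DecidableEq n]
    (σ : S →+* T) (X : Matrix n n S) (f : Polynomial S) :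
    (aeval X f).map σ = aeval (X.map σ) (f.map σ) := by
  have hcomp : (σ.mapMatrix : Matrix n n S →+* Matrix n n T).comp
      (algebraMap S (Matrix n n S)) = (algebraMap T (Matrix n n T)).comp σ := by
    ext c : 1
    ext i j
    simp [Matrix.algebraMap_matrix_apply, apply_ite σ]
  have h1 : (σ.mapMatrix : Matrix n n S →+* Matrix n n T) (aeval X f)
      = eval₂ ((σ.mapMatrix : Matrix n n S →+* Matrix n n T).comp
        (algebraMap S (Matrix n n S))) (X.map σ) f := by
    rw [aeval_def, Polynomial.hom_eval₂]
    rfl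
  rw [show (aeval X f).map σ = (σ.mapMatrix : Matrix n n S →+* Matrix n n T) (aeval X f) from rfl,
    h1, hcomp, aeval_def, Polynomial.eval₂_map]

end St12

namespace St12
variable {p : ℕ} [Fact p.Prime]

lemma dvd_of_norm_le {x y : ℤ_[p]} (h : ‖x‖ ≤ ‖y‖) : y ∣ x := by
  by_cases hy : y = 0
  · subst hy
    simp only [norm_zero] at h
    have : ‖x‖ = 0 := le_antisymm h (norm_nonneg x)
    simp [norm_eq_zero.mp this]
  · have hyq : (y : ℚ_[p]) ≠ 0 := fun h0 => hy (Subtype.ext h0)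
    have hypos : 0 < ‖(y : ℚ_[p])‖ := norm_pos_iff.mpr hyq
    have hq : ‖(x : ℚ_[p]) / (y : ℚ_[p])‖ ≤ 1 := by
      rw [norm_div, div_le_one hypos]
      exact h
    refine ⟨⟨(x : ℚ_[p]) / (y : ℚ_[p]), hq⟩, Subtype.ext ?_⟩
    show (x : ℚ_[p]) = (y : ℚ_[p]) * ((x : ℚ_[p]) / (y : ℚ_[p]))
    rw [mul_div_cancel₀ _ hyq]

lemma norm_le_of_dvd {x y : ℤ_[p]} (h : y ∣ x) : ‖x‖ ≤ ‖y‖ := by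
  obtain ⟨c, rfl⟩ := h
  rw [norm_mul]
  calc ‖y‖ * ‖c‖ ≤ ‖y‖ * 1 := by
        exact mul_le_mul_of_nonneg_left (PadicInt.norm_le_one c) (norm_nonneg y)
  _ = ‖y‖ := mul_one _

lemma toZMod_eq_zero_iff {x : ℤ_[p]} : PadicInt.toZMod x = 0 ↔ (p : ℤ_[p]) ∣ x := by
  rw [← RingHom.mem_ker, PadicInt.ker_toZMod, PadicInt.maximalIdeal_eq_span_p,
    Ideal.mem_span_singleton]

lemma isUnit_of_toZMod_ne_zero {x : ℤ_[p]} (h : PadicInt.toZMod x ≠ 0) : IsUnit x := by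
  rw [PadicInt.isUnit_iff]
  by_contra hne
  have hlt : ‖x‖ < 1 := lt_of_le_of_ne (PadicInt.norm_le_one x) hne
  exact h (toZMod_eq_zero_iff.mpr ((PadicInt.norm_lt_one_iff_dvd x).mp hlt))

lemma toZMod_surjective : Function.Surjective (PadicInt.toZMod : ℤ_[p] → ZMod p) := by
  intro z
  refine ⟨((z.val : ℕ) : ℤ_[p]), ?_⟩
  rw [map_natCast]
  have : NeZero p := ⟨(Fact.out : p.Prime).ne_zero⟩
  simp [ZMod.natCast_val, ZMod.cast_id]

lemma bezout {K : Type*} [Field K] (f : K[X]) (hf : f.coeff 0 ≠ 0) (b : ℕ) :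
    ∃ u v : K[X], u * f + v * X ^ b = 1 := by
  have hco : IsCoprime f X := by
    obtain ⟨g, hg⟩ : (X : K[X]) ∣ (f - C (f.coeff 0)) := by
      rw [Polynomial.X_dvd_iff]
      simp
    refine ⟨C (f.coeff 0)⁻¹, - (C (f.coeff 0)⁻¹ * g), ?_⟩
    have h2 : C (f.coeff 0)⁻¹ * f + -(C (f.coeff 0)⁻¹ * g) * X
        = C (f.coeff 0)⁻¹ * (f - X * g) := by ring
    have h3 : f - X * g = C (f.coeff 0) := by linear_combination hg
    rw [h2, h3, ← Polynomial.C_mul, inv_mul_cancel₀ hf, Polynomial.C_1]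
  obtain ⟨u, v, huv⟩ := hco.pow_right (n := b)
  exact ⟨u, v, huv⟩

end St12

namespace St12
variable {S T : Type*} [CommRing S] [CommRing T] {n : Type*} [Fintype n] [DecidableEq n]

lemma mmul (σ : S →+* T) (X Y : Matrix n n S) : (X*Y).map σ = X.map σ * Y.map σ := by
  simpa [RingHom.mapMatrix_apply] using map_mul σ.mapMatrix X Y

lemma mone (σ : S →+* T) : (1 : Matrix n n S).map σ = 1 := by
  simpa [RingHom.mapMatrix_apply] using map_one (σ.mapMatrix (m := n))

lemma msub (σ : S →+* T) (X Y : Matrix n n S) : (X - Y).map σ = X.map σ - Y.map σ := by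
  simpa [RingHom.mapMatrix_apply] using map_sub σ.mapMatrix X Y

lemma madd (σ : S →+* T) (X Y : Matrix n n S) : (X + Y).map σ = X.map σ + Y.map σ := by
  simpa [RingHom.mapMatrix_apply] using map_add σ.mapMatrix X Y

lemma mpow (σ : S →+* T) (X : Matrix n n S) (k : ℕ) : (X ^ k).map σ = X.map σ ^ k := by
  simpa [RingHom.mapMatrix_apply] using map_pow σ.mapMatrix X k

end St12

namespace St12
variable {S : Type*} [CommRing S] {a b : ℕ}

lemma comm_inv {R : Type*} [Monoid R] {G Gi F : R} (h1 : G * Gi = 1) (h2 : Gi * G = 1)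
    (hc : G * F = F * G) : Gi * F = F * Gi := by
  calc Gi * F = Gi * F * (G * Gi) := by rw [h1, mul_one]
  _ = Gi * (F * G) * Gi := by simp only [mul_assoc]
  _ = Gi * (G * F) * Gi := by rw [hc]
  _ = (Gi * G) * (F * Gi) := by simp only [mul_assoc]
  _ = F * Gi := by rw [h2, one_mul]

lemma tl_add (X Y : Mn S a b) : tl (X + Y) = tl X + tl Y := by
  ext i j; simp [tl]
lemma tl_sub (X Y : Mn S a b) : tl (X - Y) = tl X - tl Y := by
  ext i j; simp [tl]
lemma br_add (X Y : Mn S a b) : br (X + Y) = br X + br Y := by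
  ext i j; simp [br]
lemma br_sub (X Y : Mn S a b) : br (X - Y) = br X - br Y := by
  ext i j; simp [br]
lemma bl_add (X Y : Mn S a b) : bl (X + Y) = bl X + bl Y := by
  ext i j; simp [bl]
lemma bl_sub (X Y : Mn S a b) : bl (X - Y) = bl X - bl Y := by
  ext i j; simp [bl]

end St12

set_option maxHeartbeats 1600000 in
/-- if `M = [A; ε, B]` is a size-sorted Hessenberg matrix with `B` of size
`m = b` and the Hensel factor `χ_small` (monic, `≡ χ_B mod ε`) satisfies
`‖χ_small − t^b‖ ≤ |ε|`, then after `b` QR-rounds the connecting entry `ε'` satisfies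
`|ε'| ≤ |ε|²`. -/
theorem statement12 {p : ℕ} [Fact p.Prime] {a b : ℕ} (ha : 0 < a) (hb : 0 < b)
    (M : Matrix (Fin (a + b)) (Fin (a + b)) ℤ_[p])
    (hHess : ∀ i j : Fin (a + b), (j : ℕ) + 1 < (i : ℕ) → M i j = 0)
    (A : Matrix (Fin a) (Fin a) ℤ_[p])
    (hA : ∀ i j, A i j = M (Fin.castAdd b i) (Fin.castAdd b j))
    (B : Matrix (Fin b) (Fin b) ℤ_[p])
    (hB : ∀ i j, B i j = M (Fin.natAdd a i) (Fin.natAdd a j))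
    (ε : ℤ_[p])
    (hε : ε = M ⟨a, by omega⟩ ⟨a - 1, by omega⟩)
    (hE : ∀ i j : Fin (a + b), a ≤ (i : ℕ) → (j : ℕ) < a →
      ¬((i : ℕ) = a ∧ (j : ℕ) = a - 1) → M i j = 0)
    (hεp : (p : ℤ_[p]) ∣ ε)
    (hχB : B.charpoly.map (PadicInt.toZMod) = X ^ b)
    (hχA : PadicInt.toZMod (A.charpoly.eval 0) ≠ 0)
    -- the Hensel factorization χ_M = χ_big ⋅ χ_small with χ_small ≡ χ_B mod ε
    (χbig χsmall : Polynomial ℤ_[p])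
    (hmonic1 : χbig.Monic) (hmonic2 : χsmall.Monic)
    (hfact : M.charpoly = χbig * χsmall)
    (hbig : ∀ i, ε ∣ (χbig - A.charpoly).coeff i)
    (hsmall : ∀ i, ε ∣ (χsmall - B.charpoly).coeff i)
    -- the smallness hypothesis ‖χ_small − t^b‖ ≤ |ε|
    (hnorm : ∀ i, ‖(χsmall - X ^ b).coeff i‖ ≤ ‖ε‖)
    -- b QR-rounds
    (Mseq : ℕ → Matrix (Fin (a + b)) (Fin (a + b)) ℤ_[p])
    (hM0 : Mseq 0 = M)
    (hQR : ∀ i < b, ∃ Q R : Matrix (Fin (a + b)) (Fin (a + b)) ℤ_[p],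
      IsUnit Q ∧ (∀ s t : Fin (a + b), (t : ℕ) < (s : ℕ) → R s t = 0) ∧
      Mseq i = Q * R ∧ Mseq (i + 1) = R * Q) :
    ‖Mseq b (⟨a, by omega⟩ : Fin (a + b)) (⟨a - 1, by omega⟩ : Fin (a + b))‖
      ≤ ‖ε‖ ^ 2 := by
  classical
  open St12 in
  set φ : ℤ_[p] →+* ZMod p := PadicInt.toZMod with hφdef
  obtain ⟨Rq, _instRq, π, hπ⟩ : ∃ (Rq : Type) (_ : CommRing Rq) (π : ℤ_[p] →+* Rq),
      ∀ x : ℤ_[p], π x = 0 ↔ ε ∣ x := by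
    refine ⟨ℤ_[p] ⧸ Ideal.span {ε}, inferInstance, Ideal.Quotient.mk _, fun x => ?_⟩
    rw [Ideal.Quotient.eq_zero_iff_mem, Ideal.mem_span_singleton]
  have hφdvd : ∀ x : ℤ_[p], ε ∣ x → φ x = 0 := fun x hx =>
    St12.toZMod_eq_zero_iff.mpr (dvd_trans hεp hx)
  -- blocks of M
  have htlM : St12.tl M = A := by ext i j; exact (hA i j).symm
  have hbrM : St12.br M = B := by ext i j; exact (hB i j).symm
  have hblM : ∀ (i : Fin b) (j : Fin a), ε ∣ St12.bl M i j := by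
    intro i j
    show ε ∣ M (Fin.natAdd a i) (Fin.castAdd b j)
    by_cases hc : ((Fin.natAdd a i : Fin (a+b)) : ℕ) = a ∧ ((Fin.castAdd b j : Fin (a+b)) : ℕ) = a - 1
    · have h1 : (Fin.natAdd a i : Fin (a+b)) = ⟨a, by omega⟩ := Fin.ext hc.1
      have h2 : (Fin.castAdd b j : Fin (a+b)) = ⟨a - 1, by omega⟩ := Fin.ext hc.2
      rw [h1, h2, ← hε]
    · rw [hE _ _ (by rw [Fin.coe_natAdd]; omega) (by simpa using j.isLt) hc]
      exact dvd_zero _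
  -- accumulated QR data
  obtain ⟨Qh, Rh, hQu, hRt, hQR1, hQM⟩ :
      ∃ Qh Rh : Matrix (Fin (a+b)) (Fin (a+b)) ℤ_[p],
        IsUnit Qh ∧ (∀ s t : Fin (a+b), (t:ℕ) < (s:ℕ) → Rh s t = 0) ∧
        M ^ b = Qh * Rh ∧ Qh * Mseq b = M * Qh := by
    have key : ∀ k, k ≤ b → ∃ Qh Rh : Matrix (Fin (a+b)) (Fin (a+b)) ℤ_[p],
        IsUnit Qh ∧ (∀ s t : Fin (a+b), (t:ℕ) < (s:ℕ) → Rh s t = 0) ∧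
        M ^ k = Qh * Rh ∧ Qh * Mseq k = M * Qh := by
      intro k
      induction k with
      | zero =>
        intro _
        refine ⟨1, 1, isUnit_one, ?_, by simp, by simp [hM0]⟩
        intro s t hst
        exact Matrix.one_apply_ne (fun h => by subst h; omega)
      | succ k ih =>
        intro hk
        obtain ⟨Qk, Rk, hQku, hRkt, h1, h2⟩ := ih (by omega)
        obtain ⟨Q, R, hQu', hRu', e1, e2⟩ := hQR k (by omega)
        refine ⟨Qk * Q, R * Rk, hQku.mul hQu', ?_, ?_, ?_⟩
        · intro s t hst
          rw [Matrix.mul_apply]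
          apply Finset.sum_eq_zero
          intro m _
          by_cases hm : (m:ℕ) < (s:ℕ)
          · rw [hRu' s m hm, zero_mul]
          · rw [hRkt m t (by omega), mul_zero]
        · calc M ^ (k+1) = M * M ^ k := pow_succ' M k
          _ = M * (Qk * Rk) := by rw [h1]
          _ = (M * Qk) * Rk := by rw [Matrix.mul_assoc]
          _ = (Qk * Mseq k) * Rk := by rw [h2]
          _ = (Qk * (Q * R)) * Rk := by rw [e1]
          _ = Qk * Q * (R * Rk) := by simp only [Matrix.mul_assoc]
        · calc Qk * Q * Mseq (k+1) = Qk * Q * (R * Q) := by rw [e2]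
          _ = Qk * (Q * R) * Q := by simp only [Matrix.mul_assoc]
          _ = Qk * Mseq k * Q := by rw [e1]
          _ = M * Qk * Q := by rw [h2]
          _ = M * (Qk * Q) := by rw [Matrix.mul_assoc]
    exact key b le_rfl
  have hQdet : IsUnit Qh.det := (Matrix.isUnit_iff_isUnit_det Qh).mp hQu
  set Qi := Qh⁻¹ with hQidef
  have hQi1 : Qh * Qi = 1 := Matrix.mul_nonsing_inv _ hQdet
  have hQi2 : Qi * Qh = 1 := Matrix.nonsing_inv_mul _ hQdet
  have hMseqb : Mseq b = Qi * (M * Qh) := by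
    rw [← hQM, ← Matrix.mul_assoc, hQi2, Matrix.one_mul]
  -- polynomial divisibilities
  have hsm : ∀ i, ε ∣ (χsmall - X ^ b).coeff i := fun i => St12.dvd_of_norm_le (hnorm i)
  have hXbB : ∀ i, ε ∣ ((X : Polynomial ℤ_[p]) ^ b - B.charpoly).coeff i := by
    intro i
    have heq : ((X : Polynomial ℤ_[p]) ^ b - B.charpoly).coeff i
        = -((χsmall - X ^ b).coeff i) + (χsmall - B.charpoly).coeff i := by
      simp only [Polynomial.coeff_sub]
      ring
    rw [heq]
    exact dvd_add ((dvd_neg).mpr (hsm i)) (hsmall i)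
  have hBb : ∀ i j, ε ∣ (B ^ b) i j := by
    have hCH : aeval B B.charpoly = 0 := Matrix.aeval_self_charpoly B
    have hBeq : B ^ b = aeval B ((X : Polynomial ℤ_[p]) ^ b - B.charpoly) := by
      rw [_root_.map_sub, aeval_X_pow, hCH, sub_zero]
    intro i j
    rw [hBeq]
    exact St12.dvd_aeval_entry _ _ _ hXbB i j
  -- N and the Bezout unit G
  set N := aeval M χsmall with hNdef
  have hNM : ∀ i j, ε ∣ (N - M ^ b) i j := by
    have : N - M ^ b = aeval M (χsmall - X ^ b) := by
      rw [_root_.map_sub, aeval_X_pow, hNdef]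
    intro i j
    rw [this]
    exact St12.dvd_aeval_entry _ _ _ hsm i j
  obtain ⟨u₀, v₀, hpoly⟩ : ∃ u₀ v₀ : Polynomial ℤ_[p],
      (u₀ * χbig + v₀ * χsmall).map φ = 1 := by
    have hχsφ : χsmall.map φ = X ^ b := by
      have heq : χsmall.map φ = B.charpoly.map φ := by
        ext k
        simp only [Polynomial.coeff_map]
        have h0 : φ ((χsmall - B.charpoly).coeff k) = 0 := hφdvd _ (hsmall k)
        rw [Polynomial.coeff_sub, _root_.map_sub, sub_eq_zero] at h0
        exact h0
      rw [heq, hχB]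
    have hχbφ0 : (χbig.map φ).coeff 0 ≠ 0 := by
      rw [Polynomial.coeff_map]
      have h0 : φ ((χbig - A.charpoly).coeff 0) = 0 := hφdvd _ (hbig 0)
      rw [Polynomial.coeff_sub, _root_.map_sub, sub_eq_zero] at h0
      rw [h0, Polynomial.coeff_zero_eq_eval_zero]
      exact hχA
    obtain ⟨u', v', huv⟩ := St12.bezout (χbig.map φ) hχbφ0 b
    obtain ⟨u₀, hu₀⟩ := Polynomial.map_surjective φ St12.toZMod_surjective u'
    obtain ⟨v₀, hv₀⟩ := Polynomial.map_surjective φ St12.toZMod_surjective v'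
    refine ⟨u₀, v₀, ?_⟩
    rw [Polynomial.map_add, Polynomial.map_mul, Polynomial.map_mul, hu₀, hv₀, hχsφ]
    exact huv
  set G := aeval M (u₀ * χbig + v₀ * χsmall) with hGdef
  have hGunit : IsUnit G := by
    have hGφ : G.map φ = 1 := by
      rw [hGdef, St12.map_aeval, hpoly, _root_.map_one]
    have hdet : φ G.det = 1 := by
      have h := RingHom.map_det φ G
      rw [RingHom.mapMatrix_apply, hGφ, Matrix.det_one] at h
      exact h
    exact (Matrix.isUnit_iff_isUnit_det G).mpr
      (St12.isUnit_of_toZMod_ne_zero (by rw [hdet]; exact one_ne_zero))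
  set Gi := G⁻¹ with hGidef
  have hGi1 : G * Gi = 1 := Matrix.mul_nonsing_inv _ ((Matrix.isUnit_iff_isUnit_det G).mp hGunit)
  have hGi2 : Gi * G = 1 := Matrix.nonsing_inv_mul _ ((Matrix.isUnit_iff_isUnit_det G).mp hGunit)
  have hcomm : ∀ f g : Polynomial ℤ_[p], aeval M f * aeval M g = aeval M g * aeval M f :=
    fun f g => by rw [← _root_.map_mul, ← _root_.map_mul, mul_comm]
  have hGicomm : ∀ f : Polynomial ℤ_[p], Gi * aeval M f = aeval M f * Gi := by
    intro f
    exact St12.comm_inv hGi1 hGi2 (by rw [hGdef]; exact hcomm _ f)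
  set vN := aeval M (v₀ * χsmall) with hvNdef
  set uD := aeval M (u₀ * χbig) with huDdef
  have hGsum : G = uD + vN := by rw [hGdef, _root_.map_add]
  set P := Gi * vN with hPdef
  set PB := Gi * uD with hPBdef
  have hPsum : P + PB = 1 := by
    rw [hPdef, hPBdef, ← mul_add, add_comm vN uD, ← hGsum, hGi2]
  have hchar0 : ∀ f : Polynomial ℤ_[p], aeval M (f * (χsmall * χbig)) = 0 := fun f => by
    rw [_root_.map_mul, show χsmall * χbig = M.charpoly from by rw [hfact, mul_comm],
      Matrix.aeval_self_charpoly, mul_zero]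
  have hvNuD : vN * uD = 0 := by
    rw [hvNdef, huDdef, ← _root_.map_mul,
      show (v₀ * χsmall) * (u₀ * χbig) = (v₀ * u₀) * (χsmall * χbig) from by ring]
    exact hchar0 _
  have huDvN : uD * vN = 0 := by
    rw [hvNdef, huDdef, ← _root_.map_mul,
      show (u₀ * χbig) * (v₀ * χsmall) = (u₀ * v₀) * (χsmall * χbig) from by ring]
    exact hchar0 _
  have hPPB : P * PB = 0 := by
    calc P * PB = Gi * (vN * Gi) * uD := by simp only [hPdef, hPBdef, Matrix.mul_assoc]
    _ = Gi * (Gi * vN) * uD := by rw [(hGicomm (v₀ * χsmall)).symm]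
    _ = Gi * (Gi * (vN * uD)) := by simp only [Matrix.mul_assoc]
    _ = 0 := by rw [hvNuD, Matrix.mul_zero, Matrix.mul_zero]
  have hPBP : PB * P = 0 := by
    calc PB * P = Gi * (uD * Gi) * vN := by simp only [hPdef, hPBdef, Matrix.mul_assoc]
    _ = Gi * (Gi * uD) * vN := by rw [(hGicomm (u₀ * χbig)).symm]
    _ = Gi * (Gi * (uD * vN)) := by simp only [Matrix.mul_assoc]
    _ = 0 := by rw [huDvN, Matrix.mul_zero, Matrix.mul_zero]
  have hPidem : P * P = P := by
    have h := congrArg (fun Z => P * Z) hPsum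
    simp only [mul_add, Matrix.mul_one] at h
    rw [hPPB, add_zero] at h
    exact h
  have hPcomm : ∀ f : Polynomial ℤ_[p], P * aeval M f = aeval M f * P := by
    intro f
    calc P * aeval M f = Gi * (vN * aeval M f) := by simp only [hPdef, Matrix.mul_assoc]
    _ = Gi * (aeval M f * vN) := by rw [hvNdef, hcomm (v₀ * χsmall) f]
    _ = (Gi * aeval M f) * vN := by simp only [Matrix.mul_assoc]
    _ = (aeval M f * Gi) * vN := by rw [hGicomm f]
    _ = aeval M f * P := by simp only [hPdef, Matrix.mul_assoc]
  have hMP : M * P = P * M := by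
    have h := hPcomm X
    rw [aeval_X] at h
    exact h.symm
  have hMbP : M ^ b * P = P * M ^ b := by
    have h := hPcomm (X ^ b)
    rw [aeval_X_pow] at h
    exact h.symm
  have hNP : N * P = P * N := (hPcomm χsmall).symm
  -- mod ε block structure of P
  set Mπ := M.map π with hMπdef
  have hblMπ : St12.bl Mπ = 0 := by
    ext i j
    exact (hπ _).mpr (hblM i j)
  have hπsmallB : χsmall.map π = B.charpoly.map π := by
    ext k
    simp only [Polynomial.coeff_map]
    have h0 : π ((χsmall - B.charpoly).coeff k) = 0 := (hπ _).mpr (hsmall k)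
    rw [Polynomial.coeff_sub, _root_.map_sub, sub_eq_zero] at h0
    exact h0
  have hπbigA : χbig.map π = A.charpoly.map π := by
    ext k
    simp only [Polynomial.coeff_map]
    have h0 : π ((χbig - A.charpoly).coeff k) = 0 := (hπ _).mpr (hbig k)
    rw [Polynomial.coeff_sub, _root_.map_sub, sub_eq_zero] at h0
    exact h0
  have hbrMπ : St12.br Mπ = B.map π := by
    ext i j
    show π (M _ _) = π (B i j)
    rw [hB]
  have htlMπ : St12.tl Mπ = A.map π := by
    ext i j
    show π (M _ _) = π (A i j)
    rw [hA]
  have haevalπ : ∀ f : Polynomial ℤ_[p], (aeval M f).map π = aeval Mπ (f.map π) :=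
    fun f => St12.map_aeval π M f
  have hblaeval : ∀ f : Polynomial ℤ_[p], St12.bl ((aeval M f).map π) = 0 := fun f => by
    rw [haevalπ]
    exact St12.bl_aeval hblMπ _
  have hπB0 : aeval (St12.br Mπ) (χsmall.map π) = 0 := by
    rw [hbrMπ, hπsmallB, ← St12.map_aeval, Matrix.aeval_self_charpoly]
    ext i j
    simp [Matrix.map_apply]
  have hπA0 : aeval (St12.tl Mπ) (χbig.map π) = 0 := by
    rw [htlMπ, hπbigA, ← St12.map_aeval, Matrix.aeval_self_charpoly]
    ext i j
    simp [Matrix.map_apply]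
  have hbrvNπ : St12.br (vN.map π) = 0 := by
    rw [hvNdef, haevalπ, St12.br_aeval hblMπ, Polynomial.map_mul, _root_.map_mul, hπB0, mul_zero]
  have htluDπ : St12.tl (uD.map π) = 0 := by
    rw [huDdef, haevalπ, St12.tl_aeval hblMπ, Polynomial.map_mul, _root_.map_mul, hπA0, mul_zero]
  have hblGπ : St12.bl (G.map π) = 0 := by rw [hGdef]; exact hblaeval _
  have hblGiπ : St12.bl (Gi.map π) = 0 :=
    St12.bl_of_inv hblGπ (by rw [← St12.mmul, hGi1, St12.mone]) (by rw [← St12.mmul, hGi2, St12.mone])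
  have hblPπ : St12.bl (P.map π) = 0 := by
    rw [hPdef, St12.mmul]
    exact St12.bl_mul hblGiπ (by rw [hvNdef]; exact hblaeval _)
  have hbrPπ : St12.br (P.map π) = 0 := by
    rw [hPdef, St12.mmul, St12.br_mul hblGiπ, hbrvNπ, Matrix.mul_zero]
  have hblPBπ : St12.bl (PB.map π) = 0 := by
    rw [hPBdef, St12.mmul]
    exact St12.bl_mul hblGiπ (by rw [huDdef]; exact hblaeval _)
  have htlPBπ : St12.tl (PB.map π) = 0 := by
    rw [hPBdef, St12.mmul, St12.tl_mul (by rw [huDdef]; exact hblaeval _), htluDπ, Matrix.mul_zero]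
  have hP1 : ∀ (i : Fin b) (k : Fin (a+b)), ε ∣ P (Fin.natAdd a i) k := by
    intro i k
    rw [← hπ]
    by_cases hk : (k:ℕ) < a
    · have h := congrFun (congrFun hblPπ i) ⟨(k:ℕ), hk⟩
      simp only [St12.bl, Matrix.map_apply, Matrix.zero_apply] at h
      rw [St12.eq_castAdd hk]
      exact h
    · have h := congrFun (congrFun hbrPπ i) ⟨(k:ℕ) - a, by omega⟩
      simp only [St12.br, Matrix.map_apply, Matrix.zero_apply] at h
      rw [St12.eq_natAdd (by omega : a ≤ (k:ℕ))]
      exact h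
  have hP1M : P - 1 = -PB := by rw [← hPsum]; abel
  have hP2 : ∀ (i : Fin (a+b)) (j : Fin a), ε ∣ (P - 1) i (Fin.castAdd b j) := by
    intro i j
    rw [hP1M]
    show ε ∣ -(PB i (Fin.castAdd b j))
    rw [dvd_neg, ← hπ]
    by_cases hi : (i:ℕ) < a
    · have h := congrFun (congrFun htlPBπ ⟨(i:ℕ), hi⟩) j
      simp only [St12.tl, Matrix.map_apply, Matrix.zero_apply] at h
      rw [St12.eq_castAdd hi]
      exact h
    · have h := congrFun (congrFun hblPBπ ⟨(i:ℕ) - a, by omega⟩) j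
      simp only [St12.bl, Matrix.map_apply, Matrix.zero_apply] at h
      rw [St12.eq_natAdd (by omega : a ≤ (i:ℕ))]
      exact h
  -- R upper-triangular facts
  have hblRh : St12.bl Rh = 0 := by
    ext i j
    exact hRt _ _ (by simp [Fin.natAdd, Fin.castAdd]; omega)
  have htlsplitMb : St12.tl (M ^ b) = St12.tl Qh * St12.tl Rh := by
    rw [hQR1]
    exact St12.tl_mul hblRh
  set Aφ := A.map φ with hAφdef
  have hdetAφ : Aφ.det ≠ 0 := by
    have h1 : Aφ.det = φ A.det := by
      rw [RingHom.map_det φ A, RingHom.mapMatrix_apply]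
    have h2 : A.det = (-1)^(Fintype.card (Fin a)) * A.charpoly.coeff 0 :=
      Matrix.det_eq_sign_charpoly_coeff A
    rw [h1, h2, _root_.map_mul, _root_.map_pow, _root_.map_neg, _root_.map_one, Polynomial.coeff_zero_eq_eval_zero]
    exact mul_ne_zero (pow_ne_zero _ (neg_ne_zero.mpr one_ne_zero)) hχA
  have hblMφ : St12.bl (M.map φ) = 0 := by
    ext i j
    exact hφdvd _ (hblM i j)
  have htlMbφ : (St12.tl (M ^ b)).map φ = Aφ ^ b := by
    have h1 : (St12.tl (M ^ b)).map φ = St12.tl ((M ^ b).map φ) := by ext i j; rfl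
    have h2 : St12.tl (M.map φ) = Aφ := by
      ext i j
      show φ (M _ _) = φ (A i j)
      rw [hA]
    rw [h1, St12.mpow, St12.tl_pow hblMφ, h2]
  have hdettlMb : IsUnit (St12.tl (M ^ b)).det := by
    apply St12.isUnit_of_toZMod_ne_zero
    show φ _ ≠ 0
    rw [RingHom.map_det, RingHom.mapMatrix_apply, htlMbφ, Matrix.det_pow]
    exact pow_ne_zero _ hdetAφ
  have hdettlRh : IsUnit (St12.tl Rh).det := by
    have h := hdettlMb
    rw [htlsplitMb, Matrix.det_mul] at h
    exact isUnit_of_mul_isUnit_right h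
  have hRdiag : ∀ j : Fin a, IsUnit (Rh (Fin.castAdd b j) (Fin.castAdd b j)) := by
    intro j
    have htri : (St12.tl Rh).BlockTriangular id := by
      intro s t hst
      have h' : (t:ℕ) < (s:ℕ) := hst
      exact hRt _ _ (by simpa using h')
    have hdet := hdettlRh
    rw [Matrix.det_of_upperTriangular htri] at hdet
    rw [← Finset.mul_prod_erase Finset.univ _ (Finset.mem_univ j)] at hdet
    exact isUnit_of_mul_isUnit_left hdet
  -- the auxiliary unit H and section K
  set H := M ^ b * P + (1 - P) with hHdef
  have hblPφ : St12.bl (P.map φ) = 0 := by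
    ext i j
    exact hφdvd _ (hP1 i (Fin.castAdd b j))
  have hbrPφ : St12.br (P.map φ) = 0 := by
    ext i j
    exact hφdvd _ (hP1 i (Fin.natAdd a j))
  have htlPφ : St12.tl (P.map φ) = 1 := by
    ext i j
    have h0 : φ ((P - 1) (Fin.castAdd b i) (Fin.castAdd b j)) = 0 := hφdvd _ (hP2 _ j)
    rw [Matrix.sub_apply, _root_.map_sub, sub_eq_zero] at h0
    show φ (P _ _) = _
    rw [h0]
    have h1 := congrFun (congrFun (St12.tl_one (S := ℤ_[p]) (a := a) (b := b)) i) j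
    simp only [St12.tl] at h1
    rw [h1]
    by_cases hij : i = j
    · subst hij; simp [Matrix.one_apply]
    · simp [Matrix.one_apply, hij]
  have hHunit : IsUnit H := by
    have hHφ : H.map φ = (M.map φ) ^ b * P.map φ + (1 - P.map φ) := by
      rw [hHdef, St12.madd, St12.mmul, St12.mpow, St12.msub, St12.mone]
    have htlH : St12.tl (H.map φ) = Aφ ^ b := by
      rw [hHφ, St12.tl_add, St12.tl_sub, St12.tl_one, St12.tl_mul hblPφ, htlPφ,
        St12.tl_pow hblMφ, Matrix.mul_one, sub_self, add_zero]
      congr 1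
      ext i j
      show φ (M _ _) = φ (A i j)
      rw [hA]
    have hbrH : St12.br (H.map φ) = 1 := by
      rw [hHφ, St12.br_add, St12.br_sub, St12.br_one, St12.br_mul (St12.bl_pow hblMφ b), hbrPφ,
        Matrix.mul_zero, zero_add, sub_zero]
    have hblH : St12.bl (H.map φ) = 0 := by
      rw [hHφ, St12.bl_add, St12.bl_sub, St12.bl_one, St12.bl_mul (St12.bl_pow hblMφ b) hblPφ,
        hblPφ]
      simp
    apply (Matrix.isUnit_iff_isUnit_det H).mpr
    apply St12.isUnit_of_toZMod_ne_zero
    show φ _ ≠ 0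
    rw [RingHom.map_det, RingHom.mapMatrix_apply, St12.det_split hblH, htlH, hbrH,
      Matrix.det_one, mul_one, Matrix.det_pow]
    exact pow_ne_zero _ hdetAφ
  set Hi := H⁻¹ with hHidef
  have hHi1 : H * Hi = 1 := Matrix.mul_nonsing_inv _ ((Matrix.isUnit_iff_isUnit_det H).mp hHunit)
  have hHi2 : Hi * H = 1 := Matrix.nonsing_inv_mul _ ((Matrix.isUnit_iff_isUnit_det H).mp hHunit)
  have hHP : H * P = P * H := by
    have e1 : H * P = M ^ b * P := by
      rw [hHdef, add_mul, sub_mul, Matrix.one_mul, hPidem, sub_self, add_zero,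
        Matrix.mul_assoc, hPidem]
    have e2 : P * H = M ^ b * P := by
      rw [hHdef, mul_add, mul_sub, Matrix.mul_one, hPidem, sub_self, add_zero,
        ← Matrix.mul_assoc, ← hMbP, Matrix.mul_assoc, hPidem]
    rw [e1, e2]
  have hHicommP : Hi * P = P * Hi := St12.comm_inv hHi1 hHi2 hHP
  set K := P * (Hi * P) with hKdef
  have hMbK : M ^ b * K = P := by
    have hMbP' : M ^ b * P = H - (1 - P) := by rw [hHdef, add_sub_cancel_right]
    have h1P : (1 - P) * (Hi * P) = 0 := by
      have hc : (1 - P) * Hi = Hi * (1 - P) := by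
        rw [sub_mul, mul_sub, Matrix.one_mul, Matrix.mul_one, hHicommP]
      calc (1 - P) * (Hi * P) = ((1 - P) * Hi) * P := by rw [Matrix.mul_assoc]
      _ = (Hi * (1 - P)) * P := by rw [hc]
      _ = Hi * ((1 - P) * P) := by rw [Matrix.mul_assoc]
      _ = 0 := by rw [sub_mul, Matrix.one_mul, hPidem, sub_self, Matrix.mul_zero]
    calc M ^ b * K = (M ^ b * P) * (Hi * P) := by rw [hKdef, ← Matrix.mul_assoc]
    _ = (H - (1 - P)) * (Hi * P) := by rw [hMbP']
    _ = H * (Hi * P) - (1 - P) * (Hi * P) := by rw [sub_mul]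
    _ = P - 0 := by rw [h1P, ← Matrix.mul_assoc, hHi1, Matrix.one_mul]
    _ = P := by rw [sub_zero]
  have hKrows : ∀ (i : Fin b) (k : Fin (a+b)), ε ∣ K (Fin.natAdd a i) k := by
    intro i k
    rw [hKdef, Matrix.mul_apply]
    exact Finset.dvd_sum fun t _ => (hP1 i t).mul_right _
  -- bottom rows of Rh are divisible by ε
  have hRh_eq : Rh = Qi * M ^ b := by
    rw [hQR1, ← Matrix.mul_assoc, hQi2, Matrix.one_mul]
  have hbrMbπ : ∀ (i : Fin (a+b)) (k : Fin (a+b)), a ≤ (i:ℕ) → π ((M ^ b) i k) = 0 := by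
    intro i k hi
    have hMbπ : (M ^ b).map π = Mπ ^ b := St12.mpow π M b
    by_cases hk : (k:ℕ) < a
    · have h := congrFun (congrFun (St12.bl_pow hblMπ b) ⟨(i:ℕ) - a, by omega⟩) ⟨(k:ℕ), hk⟩
      simp only [St12.bl, Matrix.zero_apply] at h
      rw [St12.eq_natAdd hi, St12.eq_castAdd hk]
      show ((M ^ b).map π) _ _ = 0
      rw [hMbπ]
      exact h
    · have hbr : St12.br (Mπ ^ b) = 0 := by
        rw [St12.br_pow hblMπ, hbrMπ, ← St12.mpow]
        ext s t
        exact (hπ _).mpr (hBb s t)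
      have h := congrFun (congrFun hbr ⟨(i:ℕ) - a, by omega⟩) ⟨(k:ℕ) - a, by omega⟩
      simp only [St12.br, Matrix.zero_apply] at h
      rw [St12.eq_natAdd hi, St12.eq_natAdd (by omega : a ≤ (k:ℕ))]
      show ((M ^ b).map π) _ _ = 0
      rw [hMbπ]
      exact h
  have hQiπbl : St12.bl (Qi.map π) = 0 := by
    have hblRhπ : St12.bl (Rh.map π) = 0 := by
      ext i j
      have h := congrFun (congrFun hblRh i) j
      simp only [St12.bl, Matrix.zero_apply] at h
      show π (Rh _ _) = 0
      rw [h]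
      exact _root_.map_zero π
    have hblQhπ : St12.bl (Qh.map π) = 0 := by
      have h0 : St12.bl ((M ^ b).map π) = 0 := by
        ext i j
        show π ((M ^ b) _ _) = 0
        exact hbrMbπ _ _ (by rw [Fin.coe_natAdd]; omega)
      have hexp : St12.bl ((M ^ b).map π)
          = St12.bl (Qh.map π) * St12.tl (Rh.map π) + St12.br (Qh.map π) * St12.bl (Rh.map π) := by
        rw [hQR1, St12.mmul]
        exact St12.bl_mul_expand _ _
      rw [h0, hblRhπ, Matrix.mul_zero, add_zero] at hexp
      have hdet : IsUnit (St12.tl (Rh.map π)).det := by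
        have heq : (St12.tl Rh).map π = St12.tl (Rh.map π) := by ext i j; rfl
        rw [← heq, ← RingHom.mapMatrix_apply, ← RingHom.map_det]
        exact hdettlRh.map π
      calc St12.bl (Qh.map π)
          = St12.bl (Qh.map π) * (St12.tl (Rh.map π) * (St12.tl (Rh.map π))⁻¹) := by
            rw [Matrix.mul_nonsing_inv _ hdet, Matrix.mul_one]
      _ = (St12.bl (Qh.map π) * St12.tl (Rh.map π)) * (St12.tl (Rh.map π))⁻¹ := by
            rw [Matrix.mul_assoc]
      _ = 0 := by rw [← hexp, Matrix.zero_mul]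
    exact St12.bl_of_inv hblQhπ (by rw [← St12.mmul, hQi1, St12.mone])
      (by rw [← St12.mmul, hQi2, St12.mone])
  have hRrows : ∀ (i : Fin (a+b)) (k : Fin (a+b)), a ≤ (i:ℕ) → ε ∣ Rh i k := by
    intro i k hi
    rw [← hπ]
    have heq : π (Rh i k) = ((Qi.map π) * ((M ^ b).map π)) i k := by
      rw [← St12.mmul, ← hRh_eq]
      rfl
    rw [heq, Matrix.mul_apply]
    apply Finset.sum_eq_zero
    intro t _
    by_cases ht : (t:ℕ) < a
    · have h := congrFun (congrFun hQiπbl ⟨(i:ℕ) - a, by omega⟩) ⟨(t:ℕ), ht⟩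
      simp only [St12.bl, Matrix.zero_apply] at h
      rw [St12.eq_natAdd hi, St12.eq_castAdd ht, h, zero_mul]
    · have h : ((M ^ b).map π) t k = 0 := hbrMbπ t k (by omega)
      rw [h, mul_zero]
  -- Claim B: columns of (1-P) * Qh
  set Cw := (1 - P) * Qh with hCwdef
  have hPB1 : (1 : Matrix (Fin (a+b)) (Fin (a+b)) ℤ_[p]) - P = PB := by
    rw [← hPsum, add_sub_cancel_left]
  have h1PMb : ∀ (i : Fin (a+b)) (j : Fin a), ε^2 ∣ ((1 - P) * M ^ b) i (Fin.castAdd b j) := by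
    have hN1P : N * (1 - P) = 0 := by
      rw [hPB1, hNdef, hPBdef, ← Matrix.mul_assoc, ← hGicomm χsmall, Matrix.mul_assoc]
      rw [show aeval M χsmall * uD = 0 from by
        rw [huDdef, ← _root_.map_mul, show χsmall * (u₀ * χbig) = u₀ * (χsmall * χbig) from by ring]
        exact hchar0 _]
      rw [Matrix.mul_zero]
    have hcommMb1P : (1 - P) * M ^ b = M ^ b * (1 - P) := by
      rw [sub_mul, mul_sub, Matrix.one_mul, Matrix.mul_one, hMbP]
    have heq : (1 - P) * M ^ b = (M ^ b - N) * (1 - P) := by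
      rw [hcommMb1P, sub_mul, hN1P, sub_zero]
    intro i j
    rw [heq, Matrix.mul_apply]
    refine Finset.dvd_sum fun t _ => ?_
    have h1 : ε ∣ (M ^ b - N) i t := by
      have h0 := hNM i t
      have : (M ^ b - N) i t = -((N - M ^ b) i t) := by
        simp [Matrix.sub_apply]
      rw [this]
      exact (dvd_neg).mpr h0
    have h2 : ε ∣ (1 - P) t (Fin.castAdd b j) := by
      have h0 := hP2 t j
      have : ((1:Matrix (Fin (a+b)) (Fin (a+b)) ℤ_[p]) - P) t (Fin.castAdd b j)
          = -((P - 1) t (Fin.castAdd b j)) := by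
        simp [Matrix.sub_apply]
      rw [this]
      exact (dvd_neg).mpr h0
    rw [pow_two]
    exact mul_dvd_mul h1 h2
  have hCw : ∀ (j : Fin a) (i : Fin (a+b)), ε^2 ∣ Cw i (Fin.castAdd b j) := by
    suffices hS : ∀ m : ℕ, ∀ (hm : m < a), ∀ i, ε^2 ∣ Cw i (Fin.castAdd b ⟨m, hm⟩) by
      intro j i
      exact hS j.val j.isLt i
    intro m
    induction m using Nat.strong_induction_on with
    | _ m IH =>
      intro hm i
      have hsum : ∑ t, Cw i t * Rh t (Fin.castAdd b ⟨m, hm⟩)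
          = ((1 - P) * M ^ b) i (Fin.castAdd b ⟨m, hm⟩) := by
        rw [hQR1, ← Matrix.mul_assoc, ← hCwdef, Matrix.mul_apply]
      have hsplit : Cw i (Fin.castAdd b ⟨m, hm⟩) * Rh (Fin.castAdd b ⟨m, hm⟩) (Fin.castAdd b ⟨m, hm⟩)
          = ((1 - P) * M ^ b) i (Fin.castAdd b ⟨m, hm⟩)
            - ∑ t ∈ Finset.univ.erase (Fin.castAdd b ⟨m, hm⟩),
                Cw i t * Rh t (Fin.castAdd b ⟨m, hm⟩) := by
        rw [← hsum, ← Finset.add_sum_erase _ _ (Finset.mem_univ (Fin.castAdd b ⟨m, hm⟩))]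
        ring
      have hdvd2 : ε^2 ∣ Cw i (Fin.castAdd b ⟨m, hm⟩)
          * Rh (Fin.castAdd b ⟨m, hm⟩) (Fin.castAdd b ⟨m, hm⟩) := by
        rw [hsplit]
        refine dvd_sub (h1PMb i ⟨m, hm⟩) (Finset.dvd_sum fun t ht => ?_)
        rcases lt_trichotomy (t:ℕ) m with h | h | h
        · have h3 := IH (t:ℕ) h (by omega) i
          have ht' : t = Fin.castAdd b ⟨(t:ℕ), by omega⟩ := St12.eq_castAdd (by omega)
          refine Dvd.dvd.mul_right ?_ _
          rw [ht']
          exact h3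
        · exfalso
          exact (Finset.mem_erase.mp ht).1 (Fin.ext (by simpa using h))
        · rw [hRt t (Fin.castAdd b ⟨m, hm⟩) (by simpa using h), mul_zero]
          exact dvd_zero _
      have hu := hRdiag ⟨m, hm⟩
      exact (hu.dvd_mul_right).mp hdvd2
  -- Final assembly
  have hMsplit : M = M * P + M * (1 - P) := by
    rw [← mul_add, add_sub_cancel, Matrix.mul_one]
  have hexp : Qi * (M * Qh) = (Rh * K) * (M * Qh) + (Qi * M) * Cw := by
    have h1 : Qi * (M * Qh) = Qi * ((M * P) * Qh) + Qi * ((M * (1 - P)) * Qh) := by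
      conv_lhs => rw [hMsplit]
      rw [add_mul, mul_add]
    have h2 : Qi * ((M * P) * Qh) = (Rh * K) * (M * Qh) := by
      calc Qi * ((M * P) * Qh) = Qi * ((P * M) * Qh) := by rw [hMP]
      _ = (Qi * P) * (M * Qh) := by simp only [Matrix.mul_assoc]
      _ = (Qi * (M ^ b * K)) * (M * Qh) := by rw [hMbK]
      _ = ((Qi * M ^ b) * K) * (M * Qh) := by simp only [Matrix.mul_assoc]
      _ = (Rh * K) * (M * Qh) := by rw [← hRh_eq]
    have h3 : Qi * ((M * (1 - P)) * Qh) = (Qi * M) * Cw := by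
      rw [hCwdef]
      simp only [Matrix.mul_assoc]
    rw [h1, h2, h3]
  have hdvdfinal : ε^2 ∣ (Mseq b) ⟨a, by omega⟩ (⟨a - 1, by omega⟩ : Fin (a+b)) := by
    rw [hMseqb, hexp, Matrix.add_apply]
    apply dvd_add
    · -- (Rh * K) * (M * Qh)
      rw [Matrix.mul_apply]
      refine Finset.dvd_sum fun t _ => ?_
      refine Dvd.dvd.mul_right ?_ _
      rw [Matrix.mul_apply]
      refine Finset.dvd_sum fun s _ => ?_
      by_cases hs : (s:ℕ) < a
      · rw [hRt _ s (by simpa using hs), zero_mul]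
        exact dvd_zero _
      · rw [pow_two]
        exact mul_dvd_mul (hRrows _ s (by simp))
          (by rw [St12.eq_natAdd (by omega : a ≤ (s:ℕ))]; exact hKrows _ t)
    · -- (Qi * M) * Cw
      rw [Matrix.mul_apply]
      refine Finset.dvd_sum fun t _ => ?_
      refine Dvd.dvd.mul_left ?_ _
      have hj : ((⟨a - 1, by omega⟩ : Fin (a+b)) : ℕ) < a := by simp; omega
      rw [St12.eq_castAdd hj]
      exact hCw _ t
  calc ‖Mseq b (⟨a, by omega⟩ : Fin (a + b)) (⟨a - 1, by omega⟩ : Fin (a + b))‖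
      ≤ ‖ε^2‖ := St12.norm_le_of_dvd hdvdfinal
  _ = ‖ε‖^2 := by rw [pow_two, pow_two, norm_mul]
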